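/- arXiv:2102.11327 — 2 statements merged into one kernel-verified Lean document; each statement's English description precedes it below -/
import Mathlib

section
/- (Proposition 1, expected pullback metric of a stochastic map) Let ε be a standard Gaussian random vector in ℝ^K (entries independent, mean 0, E[ε_i ε_j] = δ_{ij}), and let J_μ, J_σ ∈ ℝ^{K×d} be fixed matrices. Define the random Jacobian J_f = J_μ + diag(ε) · J_σ, corresponding to the stochastic map f(z) = μ(z) + σ(z) ⊙ ε. Then the expected pullback metric satisfies E[J_fᵀ J_f] = J_μᵀ J_μ + J_σᵀ J_σ. -/
open MeasureTheory Matrix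

/-- Proposition 1, expected pullback metric of a stochastic map:
If `ε` is a standard-Gaussian-like random vector in `ℝ^K` (mean-zero entries,
`E[ε i * ε j] = δ_{ij}`) and `Jμ, Jσ ∈ ℝ^{K×d}` are fixed, then for the random
Jacobian `J_f = Jμ + diag(ε) Jσ` we have `E[J_fᵀ J_f] = Jμᵀ Jμ + Jσᵀ Jσ`. -/
theorem expected_pullback_metric
    {Ω : Type*} [MeasurableSpace Ω] (ℙ : Measure Ω) [IsProbabilityMeasure ℙ]
    {K d : ℕ} (ε : Ω → Fin K → ℝ)
    (Jμ Jσ : Matrix (Fin K) (Fin d) ℝ)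
    (hmean_int : ∀ i, Integrable (fun ω => ε ω i) ℙ)
    (hmean : ∀ i, ∫ ω, ε ω i ∂ℙ = 0)
    (hcov_int : ∀ i j, Integrable (fun ω => ε ω i * ε ω j) ℙ)
    (hcov : ∀ i j, ∫ ω, ε ω i * ε ω j ∂ℙ = if i = j then 1 else 0) :
    (Matrix.of fun i j =>
        ∫ ω, ((Jμ + Matrix.diagonal (ε ω) * Jσ)ᵀ * (Jμ + Matrix.diagonal (ε ω) * Jσ)) i j ∂ℙ)
      = Jμᵀ * Jμ + Jσᵀ * Jσ := by
  ext i j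
  have key : ∀ ω, ((Jμ + Matrix.diagonal (ε ω) * Jσ)ᵀ * (Jμ + Matrix.diagonal (ε ω) * Jσ)) i j
      = ∑ k : Fin K, (Jμ k i * Jμ k j + (Jμ k i * Jσ k j + Jσ k i * Jμ k j) * ε ω k
          + (Jσ k i * Jσ k j) * (ε ω k * ε ω k)) := by
    intro ω
    simp only [Matrix.mul_apply, Matrix.transpose_apply, Matrix.add_apply,
      Matrix.diagonal_apply, ite_mul, zero_mul, Finset.sum_ite_eq, Finset.mem_univ, if_true]
    exact Finset.sum_congr rfl fun k _ => by ring
  have hint : ∀ k : Fin K, Integrable (fun ω =>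
      Jμ k i * Jμ k j + (Jμ k i * Jσ k j + Jσ k i * Jμ k j) * ε ω k
        + (Jσ k i * Jσ k j) * (ε ω k * ε ω k)) ℙ := fun k =>
    ((integrable_const _).add ((hmean_int k).const_mul _)).add ((hcov_int k k).const_mul _)
  simp only [Matrix.of_apply]
  rw [show (fun ω => ((Jμ + Matrix.diagonal (ε ω) * Jσ)ᵀ * (Jμ + Matrix.diagonal (ε ω) * Jσ)) i j)
      = fun ω => ∑ k : Fin K, (Jμ k i * Jμ k j + (Jμ k i * Jσ k j + Jσ k i * Jμ k j) * ε ω k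
          + (Jσ k i * Jσ k j) * (ε ω k * ε ω k)) from funext key,
    MeasureTheory.integral_finset_sum _ (fun k _ => hint k)]
  have hterm : ∀ k : Fin K, ∫ ω, (Jμ k i * Jμ k j
      + (Jμ k i * Jσ k j + Jσ k i * Jμ k j) * ε ω k
      + (Jσ k i * Jσ k j) * (ε ω k * ε ω k)) ∂ℙ
      = Jμ k i * Jμ k j + Jσ k i * Jσ k j := by
    intro k
    have h1 : Integrable (fun ω => Jμ k i * Jμ k j
        + (Jμ k i * Jσ k j + Jσ k i * Jμ k j) * ε ω k) ℙ :=
      (integrable_const _).add ((hmean_int k).const_mul _)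
    have h2 : Integrable (fun ω => (Jσ k i * Jσ k j) * (ε ω k * ε ω k)) ℙ :=
      (hcov_int k k).const_mul _
    have h3 : Integrable (fun ω => (Jμ k i * Jσ k j + Jσ k i * Jμ k j) * ε ω k) ℙ :=
      (hmean_int k).const_mul _
    rw [integral_add h1 h2, integral_add (integrable_const _) h3,
      integral_const_mul, integral_const_mul, integral_const_mul, hmean, hcov k k, integral_const]
    simp
  rw [Finset.sum_congr rfl fun k _ => hterm k]
  simp [Matrix.add_apply, Matrix.mul_apply, Matrix.transpose_apply, Finset.sum_add_distrib]
end

section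
/- (Proposition 2, expected pullback metric of the composition of two stochastic maps) Let ε_F ∈ ℝ^ℓ and ε_D ∈ ℝ^K be independent random vectors, each with independent entries of mean 0 and E[ε_i ε_j] = δ_{ij} (e.g., independent standard Gaussians). Let J_{μF}, J_{σF} ∈ ℝ^{ℓ×d} and J_{μD}, J_{σD} ∈ ℝ^{K×ℓ} be fixed matrices, and define the random composite Jacobian J = J_{μD} J_{μF} + J_{μD} diag(ε_F) J_{σF} + diag(ε_D) J_{σD} J_{μF} + diag(ε_D) J_{σD} diag(ε_F) J_{σF}. Then E[Jᵀ J] = J_{μF}ᵀ Ḡ J_{μF} + J_{σF}ᵀ diag(Ḡ) J_{σF}, where Ḡ = J_{μD}ᵀ J_{μD} + J_{σD}ᵀ J_{σD} and diag(Ḡ) is the diagonal matrix with the same diagonal as Ḡ. -/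
open MeasureTheory Matrix

/-- Proposition 2, expected pullback metric of the composition of two
stochastic maps: Let `εF ∈ ℝ^l` and `εD ∈ ℝ^K` be independent random vectors, each
with mean-zero entries and `E[ε i * ε j] = δ_{ij}`. For fixed `JμF, JσF ∈ ℝ^{l×d}`
and `JμD, JσD ∈ ℝ^{K×l}`, the random composite Jacobian
`J = JμD JμF + JμD diag(εF) JσF + diag(εD) JσD JμF + diag(εD) JσD diag(εF) JσF`
satisfies `E[Jᵀ J] = JμFᵀ Ḡ JμF + JσFᵀ diag(Ḡ) JσF` where `Ḡ = JμDᵀ JμD + JσDᵀ JσD`. -/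
theorem expected_pullback_metric_composition
    {Ω : Type*} [MeasurableSpace Ω] (ℙ : Measure Ω) [IsProbabilityMeasure ℙ]
    {l K d : ℕ} (εF : Ω → Fin l → ℝ) (εD : Ω → Fin K → ℝ)
    (JμF JσF : Matrix (Fin l) (Fin d) ℝ) (JμD JσD : Matrix (Fin K) (Fin l) ℝ)
    (hF_meas : Measurable εF) (hD_meas : Measurable εD)
    (hindep : ProbabilityTheory.IndepFun εF εD ℙ)
    (hF_mean_int : ∀ i, Integrable (fun ω => εF ω i) ℙ)
    (hF_mean : ∀ i, ∫ ω, εF ω i ∂ℙ = 0)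
    (hF_cov_int : ∀ i j, Integrable (fun ω => εF ω i * εF ω j) ℙ)
    (hF_cov : ∀ i j, ∫ ω, εF ω i * εF ω j ∂ℙ = if i = j then 1 else 0)
    (hD_mean_int : ∀ i, Integrable (fun ω => εD ω i) ℙ)
    (hD_mean : ∀ i, ∫ ω, εD ω i ∂ℙ = 0)
    (hD_cov_int : ∀ i j, Integrable (fun ω => εD ω i * εD ω j) ℙ)
    (hD_cov : ∀ i j, ∫ ω, εD ω i * εD ω j ∂ℙ = if i = j then 1 else 0)
    (J : Ω → Matrix (Fin K) (Fin d) ℝ)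
    (hJ : ∀ ω, J ω = JμD * JμF + JμD * Matrix.diagonal (εF ω) * JσF +
          Matrix.diagonal (εD ω) * JσD * JμF +
          Matrix.diagonal (εD ω) * JσD * Matrix.diagonal (εF ω) * JσF)
    (Gbar : Matrix (Fin l) (Fin l) ℝ)
    (hGbar : Gbar = JμDᵀ * JμD + JσDᵀ * JσD) :
    (Matrix.of fun i j => ∫ ω, ((J ω)ᵀ * J ω) i j ∂ℙ)
      = JμFᵀ * Gbar * JμF + JσFᵀ * Matrix.diagonal Gbar.diag * JσF := by
  subst hGbar
  -- factored form of J
  have hJ' : ∀ ω, J ω = (JμD + Matrix.diagonal (εD ω) * JσD) *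
      (JμF + Matrix.diagonal (εF ω) * JσF) := by
    intro ω
    rw [hJ]
    simp only [Matrix.mul_add, Matrix.add_mul, Matrix.mul_assoc]
    abel
  ext i j
  show (∫ ω, ((J ω)ᵀ * J ω) i j ∂ℙ) = _
  -- u : function of εF,  v : function of εD
  set u : Fin l → Fin l → Ω → ℝ := fun p q ω =>
    (JμF p i + εF ω p * JσF p i) * (JμF q j + εF ω q * JσF q j) with hu_def
  set v : Fin K → Fin l → Fin l → Ω → ℝ := fun k p q ω =>
    (JμD k p + εD ω k * JσD k p) * (JμD k q + εD ω k * JσD k q) with hv_def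
  -- pointwise expansion
  have hJe : ∀ ω (k : Fin K) (c : Fin d), J ω k c
      = ∑ p : Fin l, (JμD k p + εD ω k * JσD k p) * (JμF p c + εF ω p * JσF p c) := by
    intro ω k c
    rw [hJ', Matrix.mul_apply]
    exact Finset.sum_congr rfl fun p _ => by
      simp [Matrix.add_apply, Matrix.diagonal_mul]
  have hpt : ∀ ω, ((J ω)ᵀ * J ω) i j
      = ∑ k : Fin K, ∑ p : Fin l, ∑ q : Fin l, u p q ω * v k p q ω := by
    intro ω
    rw [Matrix.mul_apply]
    refine Finset.sum_congr rfl fun k _ => ?_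
    rw [Matrix.transpose_apply, hJe, hJe, Finset.sum_mul_sum]
    refine Finset.sum_congr rfl fun p _ => Finset.sum_congr rfl fun q _ => ?_
    simp only [hu_def, hv_def]
    ring
  -- integrability and integral of u
  have hu_eq : ∀ p q, u p q = fun ω => JμF p i * JμF q j + εF ω q * (JμF p i * JσF q j)
      + εF ω p * (JσF p i * JμF q j) + εF ω p * εF ω q * (JσF p i * JσF q j) := by
    intro p q; funext ω; simp only [hu_def]; ring
  have hu_int : ∀ p q, Integrable (u p q) ℙ := by
    intro p q
    rw [hu_eq]
    exact (((integrable_const _).add ((hF_mean_int q).mul_const _)).add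
      ((hF_mean_int p).mul_const _)).add ((hF_cov_int p q).mul_const _)
  have hu_val : ∀ p q, ∫ ω, u p q ω ∂ℙ
      = JμF p i * JμF q j + (if p = q then 1 else 0) * (JσF p i * JσF q j) := by
    intro p q
    have h4 : Integrable (fun ω => εF ω p * εF ω q * (JσF p i * JσF q j)) ℙ :=
      (hF_cov_int p q).mul_const _
    have h3 : Integrable (fun ω => εF ω p * (JσF p i * JμF q j)) ℙ :=
      (hF_mean_int p).mul_const _
    have h2 : Integrable (fun ω => εF ω q * (JμF p i * JσF q j)) ℙ :=
      (hF_mean_int q).mul_const _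
    have h1 : Integrable (fun _ : Ω => JμF p i * JμF q j) ℙ := integrable_const _
    have h12 : Integrable (fun ω => JμF p i * JμF q j + εF ω q * (JμF p i * JσF q j)) ℙ :=
      h1.add h2
    have h123 : Integrable (fun ω => JμF p i * JμF q j + εF ω q * (JμF p i * JσF q j)
        + εF ω p * (JσF p i * JμF q j)) ℙ := h12.add h3
    rw [show (fun ω => u p q ω) = u p q from rfl, hu_eq]
    rw [integral_add h123 h4, integral_add h12 h3, integral_add h1 h2,
      integral_const, integral_mul_const, integral_mul_const, integral_mul_const,
      hF_mean, hF_mean, hF_cov]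
    simp [measure_univ]
  -- integrability and integral of v
  have hv_eq : ∀ k p q, v k p q = fun ω => JμD k p * JμD k q
      + εD ω k * (JμD k p * JσD k q + JσD k p * JμD k q)
      + εD ω k * εD ω k * (JσD k p * JσD k q) := by
    intro k p q; funext ω; simp only [hv_def]; ring
  have hv_int : ∀ k p q, Integrable (v k p q) ℙ := by
    intro k p q
    rw [hv_eq]
    exact ((integrable_const _).add ((hD_mean_int k).mul_const _)).add
      ((hD_cov_int k k).mul_const _)
  have hv_val : ∀ k p q, ∫ ω, v k p q ω ∂ℙ
      = JμD k p * JμD k q + JσD k p * JσD k q := by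
    intro k p q
    have h3 : Integrable (fun ω => εD ω k * εD ω k * (JσD k p * JσD k q)) ℙ :=
      (hD_cov_int k k).mul_const _
    have h2 : Integrable (fun ω => εD ω k * (JμD k p * JσD k q + JσD k p * JμD k q)) ℙ :=
      (hD_mean_int k).mul_const _
    have h1 : Integrable (fun _ : Ω => JμD k p * JμD k q) ℙ := integrable_const _
    have h12 : Integrable (fun ω => JμD k p * JμD k q
        + εD ω k * (JμD k p * JσD k q + JσD k p * JμD k q)) ℙ := h1.add h2
    rw [show (fun ω => v k p q ω) = v k p q from rfl, hv_eq]
    rw [integral_add h12 h3, integral_add h1 h2,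
      integral_const, integral_mul_const, integral_mul_const, hD_mean, hD_cov]
    simp [measure_univ]
  -- independence of u and v
  have hiuv : ∀ p q k, ProbabilityTheory.IndepFun (u p q) (v k p q) ℙ := by
    intro p q k
    have : ProbabilityTheory.IndepFun
        ((fun x : Fin l → ℝ => (JμF p i + x p * JσF p i) * (JμF q j + x q * JσF q j)) ∘ εF)
        ((fun y : Fin K → ℝ => (JμD k p + y k * JσD k p) * (JμD k q + y k * JσD k q)) ∘ εD) ℙ :=
      hindep.comp (by fun_prop) (by fun_prop)
    exact this
  have hint_uv : ∀ p q k, Integrable (fun ω => u p q ω * v k p q ω) ℙ := by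
    intro p q k
    exact (hiuv p q k).integrable_mul (hu_int p q) (hv_int k p q)
  have hmul : ∀ p q k, ∫ ω, u p q ω * v k p q ω ∂ℙ
      = (∫ ω, u p q ω ∂ℙ) * (∫ ω, v k p q ω ∂ℙ) := by
    intro p q k
    exact (hiuv p q k).integral_fun_mul_eq_mul_integral (hu_int p q).1 (hv_int k p q).1
  -- put it together
  calc ∫ ω, ((J ω)ᵀ * J ω) i j ∂ℙ
      = ∫ ω, ∑ k : Fin K, ∑ p : Fin l, ∑ q : Fin l, u p q ω * v k p q ω ∂ℙ := by
        exact integral_congr_ae (Filter.Eventually.of_forall fun ω => hpt ω)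
    _ = ∑ k : Fin K, ∑ p : Fin l, ∑ q : Fin l, ∫ ω, u p q ω * v k p q ω ∂ℙ := by
        rw [integral_finset_sum _ fun k _ => (integrable_finset_sum _ fun p _ =>
          integrable_finset_sum _ fun q _ => hint_uv p q k)]
        refine Finset.sum_congr rfl fun k _ => ?_
        rw [integral_finset_sum _ fun p _ => integrable_finset_sum _ fun q _ => hint_uv p q k]
        refine Finset.sum_congr rfl fun p _ => ?_
        rw [integral_finset_sum _ fun q _ => hint_uv p q k]
    _ = ∑ k : Fin K, ∑ p : Fin l, ∑ q : Fin l,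
        (JμF p i * JμF q j + (if p = q then 1 else 0) * (JσF p i * JσF q j))
          * (JμD k p * JμD k q + JσD k p * JσD k q) := by
        refine Finset.sum_congr rfl fun k _ => Finset.sum_congr rfl fun p _ =>
          Finset.sum_congr rfl fun q _ => ?_
        rw [hmul, hu_val, hv_val]
    _ = (JμFᵀ * (JμDᵀ * JμD + JσDᵀ * JσD) * JμF
        + JσFᵀ * Matrix.diagonal (JμDᵀ * JμD + JσDᵀ * JσD).diag * JσF) i j := by
        rw [Finset.sum_comm]
        simp only [Matrix.add_apply, Matrix.mul_apply, Matrix.transpose_apply,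
          Matrix.diagonal_apply, Matrix.diag_apply, mul_ite, mul_zero, ite_mul, zero_mul,
          Finset.sum_ite_eq, Finset.sum_ite_eq', Finset.mem_univ, if_true, one_mul,
          Finset.sum_mul, Finset.mul_sum,
          add_mul, mul_add, Finset.sum_add_distrib]
        have swap3 : ∀ (f : Fin l → Fin K → Fin l → ℝ),
            (∑ p : Fin l, ∑ k : Fin K, ∑ q : Fin l, f p k q)
              = ∑ q : Fin l, ∑ p : Fin l, ∑ k : Fin K, f p k q := by
          intro f
          calc (∑ p : Fin l, ∑ k : Fin K, ∑ q : Fin l, f p k q)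
              = ∑ p : Fin l, ∑ q : Fin l, ∑ k : Fin K, f p k q :=
                Finset.sum_congr rfl fun p _ => Finset.sum_comm
            _ = ∑ q : Fin l, ∑ p : Fin l, ∑ k : Fin K, f p k q := Finset.sum_comm
        rw [swap3 (fun p k q => JμF p i * JμF q j * (JμD k p * JμD k q)),
          swap3 (fun p k q => JμF p i * JμF q j * (JσD k p * JσD k q))]
        have e1 : (∑ q : Fin l, ∑ p : Fin l, ∑ k : Fin K, JμF p i * JμF q j * (JμD k p * JμD k q))
            = ∑ x : Fin l, ∑ x_1 : Fin l, ∑ i_1 : Fin K, JμF x_1 i * (JμD i_1 x_1 * JμD i_1 x) * JμF x j :=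
          Finset.sum_congr rfl fun q _ => Finset.sum_congr rfl fun p _ =>
            Finset.sum_congr rfl fun k _ => by ring
        have e2 : (∑ q : Fin l, ∑ p : Fin l, ∑ k : Fin K, JμF p i * JμF q j * (JσD k p * JσD k q))
            = ∑ x : Fin l, ∑ x_1 : Fin l, ∑ i_1 : Fin K, JμF x_1 i * (JσD i_1 x_1 * JσD i_1 x) * JμF x j :=
          Finset.sum_congr rfl fun q _ => Finset.sum_congr rfl fun p _ =>
            Finset.sum_congr rfl fun k _ => by ring
        have e3 : (∑ x : Fin l, ∑ x_1 : Fin K, JσF x i * JσF x j * (JμD x_1 x * JμD x_1 x))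
            = ∑ x : Fin l, ∑ i_1 : Fin K, JσF x i * (JμD i_1 x * JμD i_1 x) * JσF x j :=
          Finset.sum_congr rfl fun q _ => Finset.sum_congr rfl fun k _ => by ring
        have e4 : (∑ x : Fin l, ∑ x_1 : Fin K, JσF x i * JσF x j * (JσD x_1 x * JσD x_1 x))
            = ∑ x : Fin l, ∑ i_1 : Fin K, JσF x i * (JσD i_1 x * JσD i_1 x) * JσF x j :=
          Finset.sum_congr rfl fun q _ => Finset.sum_congr rfl fun k _ => by ring
        rw [e1, e2, e3, e4]
        ring
end
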